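/- Let E_S = E ∩ S be the set of non-terminal exits and define the linear map G : ℝ^{E_S} → ℝ^{E_S} by (Gy)(s) = Σ_{t ∈ T_i ∩ S} ζ^{(i)}_t(s)·y(t) for s ∈ E_S with s ∈ S_i. Then ‖Gy‖_∞ ≤ ρ·‖y‖_∞ for all y, where ρ = max_{s∈S} exp(R(s)/λ) < 1; consequently every (complex) eigenvalue μ of G satisfies |μ| ≤ ρ < 1. -/

import Mathlib

open Classical

/-- The boundary set `T_i` of a subset `S_i ⊆ S`: all states `x ∈ S⁺ \ S_i` (terminal or not)
with `P(x|s) > 0` for some `s ∈ S_i`. -/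
noncomputable def boundary {S T : Type} [Fintype S] [Fintype T]
    (P : S → S ⊕ T → ℝ) (Si : Finset S) : Finset (S ⊕ T) :=
  Finset.univ.filter fun x => (∀ s ∈ Si, x ≠ Sum.inl s) ∧ ∃ s ∈ Si, 0 < P s x

/-- `zi : S⁺ → ℝ` (only its values on `S_i ∪ T_i` matter) is a subtask Bellman solution for
`S_i ⊆ S` with boundary values `b` if `zi(t) = b(t)` for every `t ∈ T_i` and
`zi(s) = exp(R(s)/λ)·Σ_x P(x|s)·zi(x)` for every `s ∈ S_i`  (for `s ∈ S_i`, `P(·|s)` is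
supported on `S_i ∪ T_i`, so the sum only involves values of `zi` on `S_i ∪ T_i`). -/
def IsSubtaskSolution {S T : Type} [Fintype S] [Fintype T]
    (P : S → S ⊕ T → ℝ) (R : S → ℝ) (lam : ℝ) (Si : Finset S)
    (b : S ⊕ T → ℝ) (zi : S ⊕ T → ℝ) : Prop :=
  (∀ t ∈ boundary P Si, zi t = b t) ∧
  (∀ s ∈ Si, zi (Sum.inl s) = Real.exp (R s / lam) * ∑ x : S ⊕ T, P s x * zi x)

/-- The exit set `E = T_1 ∪ … ∪ T_L` associated with a partition `S = S_1 ∪ … ∪ S_L`. -/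
def exitSet {S T : Type} [Fintype S] [Fintype T]
    (P : S → S ⊕ T → ℝ) {L : ℕ} (Si : Fin L → Finset S) : Set (S ⊕ T) :=
  {x | ∃ i, x ∈ boundary P (Si i)}

/-- let `E_S = E ∩ S` be the set of non-terminal exits and let
`G : ℝ^{E_S} → ℝ^{E_S}` be the linear map given by `(Gy)(s) = Σ_{t ∈ T_i ∩ S} ζ^{(i)}_t(s)·y(t)`
for `s ∈ E_S` with `s ∈ S_i`. Then `‖Gy‖_∞ ≤ ρ·‖y‖_∞` for all `y`, where
`ρ = max_{s∈S} exp(R(s)/λ) < 1`; consequently every complex eigenvalue `μ` of `G` (i.e. of the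
complexification of the matrix of `G`) satisfies `|μ| ≤ ρ < 1`. -/
theorem statement14 {S T : Type} [Fintype S] [Nonempty S] [Fintype T]
    (P : S → S ⊕ T → ℝ) (R : S → ℝ) (J : T → ℝ) (lam : ℝ)
    (hP0 : ∀ s x, 0 ≤ P s x) (hP1 : ∀ s, ∑ x : S ⊕ T, P s x = 1)
    (hR : ∀ s, R s < 0) (hlam : 0 < lam)
    (L : ℕ) (Si : Fin L → Finset S)
    (hdisj : ∀ i j, i ≠ j → Disjoint (Si i) (Si j))
    (hcover : ∀ s : S, ∃ i, s ∈ Si i)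
    (zeta : Fin L → (S ⊕ T) → (S ⊕ T) → ℝ)
    (hzeta : ∀ i, ∀ t ∈ boundary P (Si i),
      IsSubtaskSolution P R lam (Si i) (fun x => if x = t then 1 else 0) (zeta i t))
    (G : ({s : S // Sum.inl s ∈ exitSet P Si} → ℝ) →ₗ[ℝ]
         ({s : S // Sum.inl s ∈ exitSet P Si} → ℝ))
    (hG : ∀ (y : {s : S // Sum.inl s ∈ exitSet P Si} → ℝ)
        (s : {s : S // Sum.inl s ∈ exitSet P Si}) (i : Fin L), s.1 ∈ Si i →
      G y s = ∑ t : {s : S // Sum.inl s ∈ exitSet P Si},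
        (if (Sum.inl t.1 : S ⊕ T) ∈ boundary P (Si i)
          then zeta i (Sum.inl t.1) (Sum.inl s.1) * y t else 0)) :
    let rho : ℝ := Finset.univ.sup' Finset.univ_nonempty (fun s : S => Real.exp (R s / lam))
    rho < 1 ∧
    (∀ y : {s : S // Sum.inl s ∈ exitSet P Si} → ℝ, ‖G y‖ ≤ rho * ‖y‖) ∧
    (∀ μ : ℂ, Module.End.HasEigenvalue
        (Matrix.toLin' ((LinearMap.toMatrix' G).map (Complex.ofReal : ℝ → ℂ))) μ →
      ‖μ‖ ≤ rho) := by

  intro rho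
  have hrho_ge : ∀ s : S, Real.exp (R s / lam) ≤ rho := fun s =>
    Finset.le_sup' (fun s : S => Real.exp (R s / lam)) (Finset.mem_univ s)
  have hrho_pos : 0 < rho :=
    lt_of_lt_of_le (Real.exp_pos _) (hrho_ge (Classical.arbitrary S))
  have hrho_lt : rho < 1 := by
    show Finset.univ.sup' Finset.univ_nonempty (fun s : S => Real.exp (R s / lam)) < 1
    rw [Finset.sup'_lt_iff]
    intro s _
    have : R s / lam < 0 := div_neg_of_neg_of_pos (hR s) hlam
    calc Real.exp (R s / lam) < Real.exp 0 := Real.exp_lt_exp.mpr this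
      _ = 1 := Real.exp_zero
  -- the maximum-principle estimate
  have hmain : ∀ (y : {s : S // Sum.inl s ∈ exitSet P Si} → ℝ) (i : Fin L) (s : S),
      s ∈ Si i →
      |∑ t : {s : S // Sum.inl s ∈ exitSet P Si},
        (if (Sum.inl t.1 : S ⊕ T) ∈ boundary P (Si i)
          then zeta i (Sum.inl t.1) (Sum.inl s) * y t else 0)| ≤ rho * ‖y‖ := by
    intro y i s hs
    set y' : {s : S // Sum.inl s ∈ exitSet P Si} → ℝ :=
      fun t => if (Sum.inl t.1 : S ⊕ T) ∈ boundary P (Si i) then y t else 0 with hy'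
    set w : S ⊕ T → ℝ := fun x => ∑ t : {s : S // Sum.inl s ∈ exitSet P Si},
      zeta i (Sum.inl t.1) x * y' t with hwdef
    have hw_eq : ∀ x : S ⊕ T, w x = ∑ t : {s : S // Sum.inl s ∈ exitSet P Si},
        (if (Sum.inl t.1 : S ⊕ T) ∈ boundary P (Si i)
          then zeta i (Sum.inl t.1) x * y t else 0) := by
      intro x
      apply Finset.sum_congr rfl
      intro t _
      rw [hy']
      dsimp only
      split <;> simp
    have hw_bnd : ∀ x ∈ boundary P (Si i), |w x| ≤ ‖y‖ := by
      intro x hx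
      have hwx : w x = ∑ t : {s : S // Sum.inl s ∈ exitSet P Si},
          (if (Sum.inl t.1 : S ⊕ T) ∈ boundary P (Si i)
            then (if x = Sum.inl t.1 then (1:ℝ) else 0) * y t else 0) := by
        rw [hw_eq x]
        apply Finset.sum_congr rfl
        intro t _
        split
        · rename_i ht
          rw [(hzeta i (Sum.inl t.1) ht).1 x hx]
        · rfl
      match x, hx with
      | Sum.inr u, hx =>
        have : w (Sum.inr u) = 0 := by
          rw [hwx]
          apply Finset.sum_eq_zero
          intro t _
          split
          · simp
          · rfl
        rw [this]
        simpa using norm_nonneg y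
      | Sum.inl u, hx =>
        have hu : (Sum.inl u : S ⊕ T) ∈ exitSet P Si := ⟨i, hx⟩
        have hwu : w (Sum.inl u) = y ⟨u, hu⟩ := by
          rw [hwx, Finset.sum_eq_single (⟨u, hu⟩ : {s : S // Sum.inl s ∈ exitSet P Si})]
          · simp [hx]
          · intro t _ htne
            by_cases h1 : (Sum.inl t.1 : S ⊕ T) ∈ boundary P (Si i)
            · rw [if_pos h1]
              have hne : (Sum.inl u : S ⊕ T) ≠ Sum.inl t.1 := by
                intro h
                exact htne (Subtype.ext (Sum.inl.inj h).symm)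
              rw [if_neg hne, zero_mul]
            · rw [if_neg h1]
          · intro h
            exact absurd (Finset.mem_univ _) h
        rw [hwu, ← Real.norm_eq_abs]
        exact norm_le_pi_norm y ⟨u, hu⟩
    have hw_rec : ∀ s' ∈ Si i, w (Sum.inl s') =
        Real.exp (R s' / lam) * ∑ x : S ⊕ T, P s' x * w x := by
      intro s' hs'
      have h1 : ∀ t : {s : S // Sum.inl s ∈ exitSet P Si},
          zeta i (Sum.inl t.1) (Sum.inl s') * y' t =
          (Real.exp (R s' / lam) * ∑ x : S ⊕ T, P s' x * zeta i (Sum.inl t.1) x) * y' t := by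
        intro t
        by_cases hc : (Sum.inl t.1 : S ⊕ T) ∈ boundary P (Si i)
        · rw [(hzeta i (Sum.inl t.1) hc).2 s' hs']
        · have : y' t = 0 := by rw [hy']; exact if_neg hc
          rw [this, mul_zero, mul_zero]
      calc w (Sum.inl s')
          = ∑ t : {s : S // Sum.inl s ∈ exitSet P Si},
              (Real.exp (R s' / lam) * ∑ x : S ⊕ T, P s' x * zeta i (Sum.inl t.1) x) * y' t := by
            rw [hwdef]
            exact Finset.sum_congr rfl fun t _ => h1 t
        _ = Real.exp (R s' / lam) * ∑ t : {s : S // Sum.inl s ∈ exitSet P Si},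
              ∑ x : S ⊕ T, P s' x * zeta i (Sum.inl t.1) x * y' t := by
            rw [Finset.mul_sum]
            apply Finset.sum_congr rfl
            intro t _
            rw [mul_assoc, Finset.sum_mul]
        _ = Real.exp (R s' / lam) * ∑ x : S ⊕ T,
              ∑ t : {s : S // Sum.inl s ∈ exitSet P Si},
              P s' x * zeta i (Sum.inl t.1) x * y' t := by
            rw [Finset.sum_comm]
        _ = Real.exp (R s' / lam) * ∑ x : S ⊕ T, P s' x * w x := by
            congr 1
            apply Finset.sum_congr rfl
            intro x _
            rw [hwdef]
            dsimp only
            rw [Finset.mul_sum]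
            apply Finset.sum_congr rfl
            intro t _
            ring
    have hSine : (Si i).Nonempty := ⟨s, hs⟩
    set M := (Si i).sup' hSine (fun s' => |w (Sum.inl s')|) with hM
    have hM_le : M ≤ rho * ‖y‖ := by
      obtain ⟨s₀, hs₀, hMs₀⟩ := Finset.exists_mem_eq_sup' hSine (fun s' => |w (Sum.inl s')|)
      have hBnn : (0:ℝ) ≤ max M ‖y‖ := le_trans (norm_nonneg y) (le_max_right M ‖y‖)
      have hwB : ∀ x : S ⊕ T, P s₀ x * |w x| ≤ P s₀ x * max M ‖y‖ := by
        intro x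
        rcases eq_or_lt_of_le (hP0 s₀ x) with h0 | h0
        · rw [← h0, zero_mul, zero_mul]
        · apply mul_le_mul_of_nonneg_left _ (hP0 s₀ x)
          match x with
          | Sum.inl u =>
            by_cases hu : u ∈ Si i
            · exact le_trans (Finset.le_sup' (fun s' => |w (Sum.inl s')|) hu) (le_max_left _ _)
            · have hxb : (Sum.inl u : S ⊕ T) ∈ boundary P (Si i) := by
                rw [boundary, Finset.mem_filter]
                refine ⟨Finset.mem_univ _, ?_, s₀, hs₀, h0⟩
                intro s'' hs'' h
                exact hu (Sum.inl.inj h ▸ hs'')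
              exact le_trans (hw_bnd _ hxb) (le_max_right _ _)
          | Sum.inr u =>
            have hxb : (Sum.inr u : S ⊕ T) ∈ boundary P (Si i) := by
              rw [boundary, Finset.mem_filter]
              exact ⟨Finset.mem_univ _, fun s'' _ => Sum.inr_ne_inl, s₀, hs₀, h0⟩
            exact le_trans (hw_bnd _ hxb) (le_max_right _ _)
      have h2 : |w (Sum.inl s₀)| ≤ rho * max M ‖y‖ := by
        rw [hw_rec s₀ hs₀, abs_mul, abs_of_pos (Real.exp_pos _)]
        calc Real.exp (R s₀ / lam) * |∑ x : S ⊕ T, P s₀ x * w x|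
            ≤ Real.exp (R s₀ / lam) * ∑ x : S ⊕ T, P s₀ x * |w x| := by
              apply mul_le_mul_of_nonneg_left _ (Real.exp_pos _).le
              calc |∑ x : S ⊕ T, P s₀ x * w x| ≤ ∑ x : S ⊕ T, |P s₀ x * w x| :=
                    Finset.abs_sum_le_sum_abs _ _
                _ = ∑ x : S ⊕ T, P s₀ x * |w x| := by
                    apply Finset.sum_congr rfl
                    intro x _
                    rw [abs_mul, abs_of_nonneg (hP0 s₀ x)]
          _ ≤ Real.exp (R s₀ / lam) * ∑ x : S ⊕ T, P s₀ x * max M ‖y‖ := by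
              apply mul_le_mul_of_nonneg_left _ (Real.exp_pos _).le
              exact Finset.sum_le_sum fun x _ => hwB x
          _ = Real.exp (R s₀ / lam) * max M ‖y‖ := by
              rw [← Finset.sum_mul, hP1 s₀, one_mul]
          _ ≤ rho * max M ‖y‖ := mul_le_mul_of_nonneg_right (hrho_ge s₀) hBnn
      have hMB : M ≤ rho * max M ‖y‖ := le_of_eq_of_le (hM.trans hMs₀) h2
      rcases max_cases M ‖y‖ with ⟨hBM, _⟩ | ⟨hBy, _⟩
      · rw [hBM] at hMB
        have hM0 : M ≤ 0 := by nlinarith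
        exact le_trans hM0 (mul_nonneg hrho_pos.le (norm_nonneg y))
      · rw [hBy] at hMB
        exact hMB
    calc |∑ t : {s : S // Sum.inl s ∈ exitSet P Si},
        (if (Sum.inl t.1 : S ⊕ T) ∈ boundary P (Si i)
          then zeta i (Sum.inl t.1) (Sum.inl s) * y t else 0)|
        = |w (Sum.inl s)| := by rw [hw_eq]
      _ ≤ M := Finset.le_sup' (fun s' => |w (Sum.inl s')|) hs
      _ ≤ rho * ‖y‖ := hM_le
  -- the norm bound
  have hbound : ∀ y : {s : S // Sum.inl s ∈ exitSet P Si} → ℝ, ‖G y‖ ≤ rho * ‖y‖ := by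
    intro y
    rw [pi_norm_le_iff_of_nonneg (mul_nonneg hrho_pos.le (norm_nonneg y))]
    intro s
    obtain ⟨i, hi⟩ := hcover s.1
    rw [hG y s i hi, Real.norm_eq_abs]
    exact hmain y i s.1 hi
  refine ⟨hrho_lt, hbound, ?_⟩
  -- eigenvalue bound
  intro μ hμ
  set B := LinearMap.toMatrix' G with hBdef
  have hrow : ∀ s : {s : S // Sum.inl s ∈ exitSet P Si},
      ∑ t : {s : S // Sum.inl s ∈ exitSet P Si}, |B s t| ≤ rho := by
    intro s
    set ysgn : {s : S // Sum.inl s ∈ exitSet P Si} → ℝ :=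
      fun t => if 0 ≤ B s t then 1 else -1 with hysgn
    have hynorm : ‖ysgn‖ ≤ 1 := by
      rw [pi_norm_le_iff_of_nonneg zero_le_one]
      intro t
      rw [Real.norm_eq_abs, hysgn]
      dsimp only
      split <;> simp
    have hGmul : G ysgn = B.mulVec ysgn := by
      rw [hBdef, ← Matrix.toLin'_apply, Matrix.toLin'_toMatrix']
    have hGys : G ysgn s = ∑ t : {s : S // Sum.inl s ∈ exitSet P Si}, |B s t| := by
      rw [hGmul]
      show ∑ t, B s t * ysgn t = _
      apply Finset.sum_congr rfl
      intro t _
      rw [hysgn]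
      dsimp only
      split
      · rename_i h
        rw [mul_one, abs_of_nonneg h]
      · rename_i h
        rw [mul_neg_one, abs_of_neg (lt_of_not_ge h)]
    calc ∑ t : {s : S // Sum.inl s ∈ exitSet P Si}, |B s t| = G ysgn s := hGys.symm
      _ ≤ |G ysgn s| := le_abs_self _
      _ ≤ ‖G ysgn‖ := by rw [← Real.norm_eq_abs]; exact norm_le_pi_norm _ s
      _ ≤ rho * ‖ysgn‖ := hbound ysgn
      _ ≤ rho * 1 := mul_le_mul_of_nonneg_left hynorm hrho_pos.le
      _ = rho := mul_one rho
  obtain ⟨v, hv⟩ := hμ.exists_hasEigenvector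
  have hveq : (B.map (Complex.ofReal : ℝ → ℂ)).mulVec v = μ • v := by
    have h := hv.apply_eq_smul
    rwa [Matrix.toLin'_apply] at h
  obtain ⟨s₁, hs₁⟩ := Function.ne_iff.mp hv.2
  obtain ⟨s₀, _, hs₀⟩ := Finset.exists_max_image Finset.univ
    (fun t => ‖v t‖) ⟨s₁, Finset.mem_univ _⟩
  have hvs₀pos : 0 < ‖v s₀‖ :=
    lt_of_lt_of_le (norm_pos_iff.mpr hs₁) (hs₀ s₁ (Finset.mem_univ _))
  have key : ‖μ‖ * ‖v s₀‖ ≤ rho * ‖v s₀‖ := by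
    calc ‖μ‖ * ‖v s₀‖ = ‖μ * v s₀‖ := (norm_mul _ _).symm
      _ = ‖((B.map (Complex.ofReal : ℝ → ℂ)).mulVec v) s₀‖ := by
          rw [hveq]
          simp
      _ = ‖∑ t, ((B s₀ t : ℂ)) * v t‖ := by
          simp [Matrix.mulVec, dotProduct, Matrix.map_apply]
      _ ≤ ∑ t, ‖(B s₀ t : ℂ) * v t‖ := norm_sum_le _ _
      _ = ∑ t, |B s₀ t| * ‖v t‖ := by
          apply Finset.sum_congr rfl
          intro t _
          rw [norm_mul, Complex.norm_real, Real.norm_eq_abs]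
      _ ≤ ∑ t, |B s₀ t| * ‖v s₀‖ := by
          apply Finset.sum_le_sum
          intro t _
          exact mul_le_mul_of_nonneg_left (hs₀ t (Finset.mem_univ _)) (abs_nonneg _)
      _ = (∑ t, |B s₀ t|) * ‖v s₀‖ := by rw [Finset.sum_mul]
      _ ≤ rho * ‖v s₀‖ :=
          mul_le_mul_of_nonneg_right (hrow s₀) (norm_nonneg _)
  exact le_of_mul_le_mul_right key hvs₀pos
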